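/- Let Z and W be compact metric spaces with Z connected (and each with at least two points), and let φ: Z → W be a homeomorphism. Suppose φ is uniformly locally quasisymmetric: there exist r₀ > 0 and a continuous monotone increasing function η: [0,∞) → [0,∞) with η(0) = 0 and η(t) > 0 for t > 0 such that for every triple of distinct points x, y, z ∈ Z with diam{x,y,z} ≤ r₀, one has d_W(φ(x),φ(y))/d_W(φ(x),φ(z)) ≤ η(d_Z(x,y)/d_Z(x,z)). Then φ is globally quasisymmetric; in fact there is κ > 0 such that d_W(φ(x),φ(y)) ≥ κ whenever d_Z(x,y) ≥ r₀/4, and φ is η̂-quasisymmetric with gauge η̂(t) = max{ η(t), (diam(W)/κ)·η(t), (diam(W)/κ)·η((2 diam(Z)/r₀)·t), (diam(W)/(κ·η(r₀/(2 diam(Z)))))·η(t) }. -/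
import Mathlib


open Metric Set

set_option maxHeartbeats 2000000

theorem uniformly_locally_quasisymmetric_implies_quasisymmetric
    {Z W : Type*} [MetricSpace Z] [CompactSpace Z] [ConnectedSpace Z] [Nontrivial Z]
    [MetricSpace W] [CompactSpace W] [Nontrivial W]
    (φ : Z ≃ₜ W) (r₀ : ℝ) (hr₀ : 0 < r₀) (η : ℝ → ℝ)
    (hηc : ContinuousOn η (Ici 0)) (hηm : MonotoneOn η (Ici 0)) (hη0 : η 0 = 0)
    (hηpos : ∀ t, 0 < t → 0 < η t)
    (hloc : ∀ x y z : Z, x ≠ y → x ≠ z → y ≠ z →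
      Metric.diam ({x, y, z} : Set Z) ≤ r₀ →
      dist (φ x) (φ y) / dist (φ x) (φ z) ≤ η (dist x y / dist x z)) :
    ∃ κ > 0, (∀ x y : Z, r₀ / 4 ≤ dist x y → κ ≤ dist (φ x) (φ y)) ∧
      ∀ x y z : Z, x ≠ y → x ≠ z → y ≠ z →
        dist (φ x) (φ z) / dist (φ x) (φ y) ≤
          max (max (η (dist x z / dist x y))
                   (Metric.diam (Set.univ : Set W) / κ * η (dist x z / dist x y)))
              (max (Metric.diam (Set.univ : Set W) / κ *
                      η (2 * Metric.diam (Set.univ : Set Z) / r₀ * (dist x z / dist x y)))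
                   (Metric.diam (Set.univ : Set W) /
                      (κ * η (r₀ / (2 * Metric.diam (Set.univ : Set Z)))) *
                      η (dist x z / dist x y))) := by
  classical
  have hφinj : Function.Injective (φ : Z → W) := φ.injective
  set DZ := Metric.diam (Set.univ : Set Z) with hDZdef
  set DW := Metric.diam (Set.univ : Set W) with hDWdef
  have hbZ : Bornology.IsBounded (univ : Set Z) := isCompact_univ.isBounded
  have hbW : Bornology.IsBounded (univ : Set W) := isCompact_univ.isBounded
  have hdZ : ∀ a b : Z, dist a b ≤ DZ := fun a b =>
    Metric.dist_le_diam_of_mem hbZ trivial trivial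
  have hdW : ∀ a b : W, dist a b ≤ DW := fun a b =>
    Metric.dist_le_diam_of_mem hbW trivial trivial
  have hDZpos : 0 < DZ := by
    obtain ⟨a, b, hab⟩ := exists_pair_ne Z
    exact lt_of_lt_of_le (dist_pos.2 hab) (hdZ a b)
  have hDWnn : 0 ≤ DW := Metric.diam_nonneg
  set S : Set (Z × Z) := {p | r₀ / 4 ≤ dist p.1 p.2} with hSdef
  have hScl : IsClosed S := isClosed_le continuous_const (by fun_prop)
  have hScpt : IsCompact S := hScl.isCompact
  by_cases hSne : S.Nonempty
  · obtain ⟨p0, hp0S, hp0min⟩ := hScpt.exists_isMinOn hSne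
      (Continuous.continuousOn (by fun_prop :
        Continuous fun p : Z × Z => dist (φ p.1) (φ p.2)))
    set κ := dist (φ p0.1) (φ p0.2) with hκdef
    have hp0ne : p0.1 ≠ p0.2 := by
      intro h
      have : (0:ℝ) < dist p0.1 p0.2 := lt_of_lt_of_le (by linarith) hp0S
      rw [h, dist_self] at this; linarith
    have hκpos : 0 < κ := dist_pos.2 fun h => hp0ne (hφinj h)
    have hκ : ∀ x y : Z, r₀ / 4 ≤ dist x y → κ ≤ dist (φ x) (φ y) := by
      intro x y hxy
      exact hp0min (show (x, y) ∈ S from hxy)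
    refine ⟨κ, hκpos, hκ, ?_⟩
    intro x y z hxy hxz hyz
    have hdxy : 0 < dist x y := dist_pos.2 hxy
    have hdxz : 0 < dist x z := dist_pos.2 hxz
    have hφxy : 0 < dist (φ x) (φ y) := dist_pos.2 fun h => hxy (hφinj h)
    have hφxz : 0 < dist (φ x) (φ z) := dist_pos.2 fun h => hxz (hφinj h)
    set t := dist x z / dist x y with htdef
    have htpos : 0 < t := div_pos hdxz hdxy
    have hηt : 0 < η t := hηpos t htpos
    by_cases hdiam : Metric.diam ({x, y, z} : Set Z) ≤ r₀
    · -- local case: first branch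
      have hd' : Metric.diam ({x, z, y} : Set Z) ≤ r₀ := by
        rw [Metric.diam_triple] at hdiam ⊢
        rw [dist_comm z y]
        simp only [sup_le_iff] at hdiam ⊢
        tauto
      have := hloc x z y hxz hxy (Ne.symm hyz) hd'
      exact le_max_of_le_left (le_max_of_le_left this)
    · rw [Metric.diam_triple] at hdiam
      push_neg at hdiam
      simp only [lt_sup_iff] at hdiam
      by_cases hxy4 : dist x y < r₀ / 4
      · -- Case II : second branch
        have hxz2 : r₀ / 2 < dist x z := by
          by_contra h
          push_neg at h
          have hyz' : dist y z ≤ dist y x + dist x z := dist_triangle y x z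
          rw [dist_comm y x] at hyz'
          rcases hdiam with (h1 | h1) | h1 <;> linarith
        obtain ⟨w, hw⟩ : ∃ w : Z, dist x w = r₀ / 4 := by
          have : (r₀/4) ∈ Icc (dist x x) (dist x z) := by
            rw [dist_self]; constructor <;> linarith
          obtain ⟨w, hw⟩ := intermediate_value_univ x z
            (continuous_const.dist continuous_id) this
          exact ⟨w, hw⟩
        have hxw : x ≠ w := by
          intro h; rw [← h, dist_self] at hw; linarith
        have hwy : w ≠ y := by
          intro h; rw [h] at hw; linarith
        have hdwy : dist w y ≤ r₀ / 2 := by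
          have := dist_triangle w x y
          rw [dist_comm w x] at this
          linarith
        have hdiam' : Metric.diam ({x, w, y} : Set Z) ≤ r₀ := by
          rw [Metric.diam_triple]
          simp only [sup_le_iff]
          refine ⟨⟨by linarith, by linarith⟩, by linarith⟩
        have h1 := hloc x w y hxw hxy hwy hdiam'
        have hκw : κ ≤ dist (φ x) (φ w) := hκ x w (le_of_eq hw.symm)
        have hargnn : (0:ℝ) ≤ dist x w / dist x y := by positivity
        have harg : dist x w / dist x y ≤ t := by
          rw [htdef, div_le_div_iff₀ hdxy hdxy]
          nlinarith [hdxy.le]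
        have hηmono : η (dist x w / dist x y) ≤ η t := hηm hargnn htpos.le harg
        have hkey : κ ≤ dist (φ x) (φ y) * η t := by
          rw [div_le_iff₀ hφxy] at h1
          nlinarith [mul_le_mul_of_nonneg_right hηmono hφxy.le]
        have hmain : dist (φ x) (φ z) / dist (φ x) (φ y) ≤ DW / κ * η t := by
          rw [show DW / κ * η t = DW * η t / κ from by ring,
            div_le_div_iff₀ hφxy hκpos]
          nlinarith [hdW (φ x) (φ z), hφxz.le, hκpos.le, hηt.le]
        exact le_max_of_le_left (le_max_of_le_right hmain)
      · push_neg at hxy4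
        have hκxy : κ ≤ dist (φ x) (φ y) := hκ x y hxy4
        by_cases hxz2 : r₀ / 2 ≤ dist x z
        · -- Case I.a : fourth branch
          have hc : (0:ℝ) < r₀ / (2 * DZ) := by positivity
          have hηc : 0 < η (r₀ / (2 * DZ)) := hηpos _ hc
          have hct : r₀ / (2 * DZ) ≤ t := by
            rw [htdef, div_le_div_iff₀ (by positivity) hdxy]
            nlinarith [mul_le_mul_of_nonneg_left (hdZ x y) hr₀.le,
              mul_le_mul_of_nonneg_right hxz2 hDZpos.le]
          have hηct : η (r₀ / (2 * DZ)) ≤ η t := hηm hc.le htpos.le hct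
          have hmain : dist (φ x) (φ z) / dist (φ x) (φ y) ≤
              DW / (κ * η (r₀ / (2 * DZ))) * η t := by
            rw [show DW / (κ * η (r₀ / (2 * DZ))) * η t
                = DW * η t / (κ * η (r₀ / (2 * DZ))) from by ring,
              div_le_div_iff₀ hφxy (by positivity)]
            calc dist (φ x) (φ z) * (κ * η (r₀ / (2 * DZ)))
                ≤ DW * (κ * η (r₀ / (2 * DZ))) :=
                  mul_le_mul_of_nonneg_right (hdW _ _) (by positivity)
              _ ≤ DW * (dist (φ x) (φ y) * η t) :=
                  mul_le_mul_of_nonneg_left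
                    (mul_le_mul hκxy hηct hηc.le hφxy.le) hDWnn
              _ = DW * η t * dist (φ x) (φ y) := by ring
          exact le_max_of_le_right (le_max_of_le_right hmain)
        · -- Case I.b : third branch
          push_neg at hxz2
          have hxy2 : r₀ / 2 < dist x y := by
            have hyz' : dist y z ≤ dist y x + dist x z := dist_triangle y x z
            rw [dist_comm y x] at hyz'
            rcases hdiam with (h1 | h1) | h1 <;> linarith
          obtain ⟨w, hw⟩ : ∃ w : Z, dist x w = r₀ / 2 := by
            have : (r₀/2) ∈ Icc (dist x x) (dist x y) := by
              rw [dist_self]; constructor <;> linarith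
            obtain ⟨w, hw⟩ := intermediate_value_univ x y
              (continuous_const.dist continuous_id) this
            exact ⟨w, hw⟩
          have hxw : x ≠ w := by
            intro h; rw [← h, dist_self] at hw; linarith
          have hzw : z ≠ w := by
            intro h; rw [h] at hxz2; linarith
          have hdzw : dist z w ≤ r₀ := by
            have := dist_triangle z x w
            rw [dist_comm z x] at this
            linarith
          have hdiam' : Metric.diam ({x, z, w} : Set Z) ≤ r₀ := by
            rw [Metric.diam_triple]
            simp only [sup_le_iff]
            exact ⟨⟨by linarith, by linarith⟩, hdzw⟩
          have h1 := hloc x z w hxz hxw hzw hdiam'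
          have hφxw : 0 < dist (φ x) (φ w) := dist_pos.2 fun h => hxw (hφinj h)
          have hdxw : 0 < dist x w := by rw [hw]; positivity
          have hηann : (0:ℝ) ≤ η (dist x z / dist x w) :=
            (hηpos _ (div_pos hdxz hdxw)).le
          have h2 : dist (φ x) (φ z) ≤ DW * η (dist x z / dist x w) := by
            rw [div_le_iff₀ hφxw] at h1
            calc dist (φ x) (φ z) ≤ η (dist x z / dist x w) * dist (φ x) (φ w) := h1
              _ ≤ η (dist x z / dist x w) * DW :=
                  mul_le_mul_of_nonneg_left (hdW _ _) hηann
              _ = DW * η (dist x z / dist x w) := mul_comm _ _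
          have harg : dist x z / dist x w ≤ 2 * DZ / r₀ * t := by
            have hR : 2 * DZ / r₀ * t = (2 * DZ * dist x z) / (r₀ * dist x y) := by
              rw [htdef, div_mul_div_comm]
            rw [hw, hR, div_le_div_iff₀ (by positivity) (by positivity)]
            nlinarith [mul_le_mul_of_nonneg_left (hdZ x y)
              (by positivity : (0:ℝ) ≤ 2 * dist x z), hr₀.le, hdxz.le]
          have hηarg : η (dist x z / dist x w) ≤ η (2 * DZ / r₀ * t) :=
            hηm (mem_Ici.2 (div_nonneg hdxz.le hdxw.le))
              (mem_Ici.2 (mul_nonneg (by positivity) htpos.le)) harg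
          have hmain : dist (φ x) (φ z) / dist (φ x) (φ y) ≤
              DW / κ * η (2 * DZ / r₀ * t) := by
            rw [show DW / κ * η (2 * DZ / r₀ * t)
                = DW * η (2 * DZ / r₀ * t) / κ from by ring,
              div_le_div_iff₀ hφxy hκpos]
            have h3 : DW * η (dist x z / dist x w) ≤ DW * η (2 * DZ / r₀ * t) :=
              mul_le_mul_of_nonneg_left hηarg hDWnn
            exact mul_le_mul (h2.trans h3) hκxy hκpos.le
              (mul_nonneg hDWnn (hηpos _ (mul_pos (by positivity) htpos)).le)
          exact le_max_of_le_right (le_max_of_le_left hmain)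
  · refine ⟨1, one_pos, ?_, ?_⟩
    · intro x y hxy
      exact absurd ⟨(x, y), hxy⟩ hSne
    · intro x y z hxy hxz hyz
      have hsmall : ∀ a b : Z, dist a b < r₀ / 4 := by
        intro a b
        by_contra h
        push_neg at h
        exact hSne ⟨(a, b), h⟩
      have hdiam : Metric.diam ({x, z, y} : Set Z) ≤ r₀ := by
        rw [Metric.diam_triple]
        simp only [sup_le_iff]
        exact ⟨⟨by linarith [hsmall x z], by linarith [hsmall x y]⟩,
          by linarith [hsmall z y]⟩
      have := hloc x z y hxz hxy (Ne.symm hyz) hdiam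
      exact le_max_of_le_left (le_max_of_le_left this)
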